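/- arXiv:2407.20804 — 5 statements merged into one kernel-verified Lean document; each statement's English description precedes it below -/
import Mathlib

section
/- Let (Ω, P) be a finite probability space with full support associated with a lattice (V, w) in dimension d ≥ 2, and let X_α (1 ≤ α ≤ d) be the component random variables. Suppose (V, w) is isotropic with speed of sound c_s = 3^{-1/2}, and that each X_α takes values in [-1, 1]. Then for every α ∈ {1, ..., d}: P(X_α = 0) = 2/3 and P(X_α = 1) = P(X_α = -1) = 1/6; in particular X_α takes values only in {-1, 0, 1} almost surely. -/
open Real Set
noncomputable section

abbrev Spc (d : ℕ) := EuclideanSpace ℝ (Fin d)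

/-- Kronecker delta. -/
def kron {d : ℕ} (α β : Fin d) : ℝ := if α = β then 1 else 0

/-- An isotropic lattice `(𝒱, w)` with speed of sound `cs`: pairwise distinct velocities
`v i` (with `v 0 = 0`) and strictly positive weights satisfying the five isotropy summation
(moment) conditions. -/
structure IsoLattice (d n : ℕ) (v : Fin (n + 1) → Spc d) (w : Fin (n + 1) → ℝ) (cs : ℝ) :
    Prop where
  cs_pos : 0 < cs
  w_pos : ∀ i, 0 < w i
  v_zero : v 0 = 0
  v_inj : Function.Injective v
  sum_w : ∑ i, w i = 1
  sum_wv : ∀ α : Fin d, ∑ i, w i * v i α = 0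
  sum_wvv : ∀ α β : Fin d, ∑ i, w i * (v i α * v i β) = cs ^ 2 * kron α β
  sum_wvvv : ∀ α β γ : Fin d, ∑ i, w i * (v i α * v i β * v i γ) = 0
  sum_wvvvv : ∀ α β γ ζ : Fin d, ∑ i, w i * (v i α * v i β * v i γ * v i ζ) =
    cs ^ 4 * (kron α β * kron γ ζ + kron α γ * kron β ζ + kron α ζ * kron β γ)

open Classical in
/-- The probability `P(S)` of an event `S ⊆ Ω = {0,…,n}` on the finite probability space
associated with a lattice with weights `w` (`P({i}) = wᵢ`). -/
def probOf (n : ℕ) (w : Fin (n + 1) → ℝ) (S : Fin (n + 1) → Prop) : ℝ :=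
  ∑ i, if S i then w i else 0


/- STATEMENT 13: If (𝒱, w) is isotropic with c_s = 3^{-1/2} and each component random variable
X_α = v_{·,α} takes values in [-1,1], then P(X_α = 0) = 2/3, P(X_α = 1) = P(X_α = -1) = 1/6,
and in particular X_α takes values only in {-1,0,1}. -/

theorem isotropic_lattice_marginal_law (d n : ℕ) (hd : 2 ≤ d)
    (v : Fin (n + 1) → Spc d) (w : Fin (n + 1) → ℝ)
    (hlat : IsoLattice d n v w (Real.sqrt 3)⁻¹)
    (hbdd : ∀ i, ∀ α : Fin d, |v i α| ≤ 1) :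
    ∀ α : Fin d,
      probOf n w (fun i => v i α = 0) = 2 / 3 ∧
      probOf n w (fun i => v i α = 1) = 1 / 6 ∧
      probOf n w (fun i => v i α = -1) = 1 / 6 ∧
      ∀ i, v i α ∈ ({-1, 0, 1} : Set ℝ) := by
  classical
  intro α
  have hcs2 : ((Real.sqrt 3)⁻¹) ^ 2 = 1 / 3 := by
    rw [inv_pow, Real.sq_sqrt (by norm_num : (3:ℝ) ≥ 0)]; norm_num
  have hcs4 : ((Real.sqrt 3)⁻¹) ^ 4 = 1 / 9 := by
    have h : ((Real.sqrt 3)⁻¹) ^ 4 = (((Real.sqrt 3)⁻¹) ^ 2) ^ 2 := by ring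
    rw [h, hcs2]; norm_num
  have h1 := hlat.sum_wv α
  have h2 := hlat.sum_wvv α α
  have h4 := hlat.sum_wvvvv α α α α
  rw [hcs2] at h2
  rw [hcs4] at h4
  simp only [kron, if_pos rfl] at h2 h4
  have h2' : ∑ i, w i * (v i α * v i α) = 1 / 3 := by rw [h2]; norm_num
  have h4' : ∑ i, w i * (v i α * v i α * v i α * v i α) = 1 / 3 := by
    rw [h4]; norm_num
  have hzero : ∑ i, (w i * (v i α * v i α) - w i * (v i α * v i α * v i α * v i α)) = 0 := by
    rw [Finset.sum_sub_distrib, h2', h4']; ring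
  have htri : ∀ i, v i α = -1 ∨ v i α = 0 ∨ v i α = 1 := by
    intro i
    have hnonneg : ∀ j ∈ Finset.univ,
        0 ≤ w j * (v j α * v j α) - w j * (v j α * v j α * v j α * v j α) := by
      intro j _
      have hw := hlat.w_pos j
      have hb := abs_le.mp (hbdd j α)
      have hx2le : v j α * v j α ≤ 1 := by nlinarith [hb.1, hb.2]
      have hkey := mul_nonneg (mul_nonneg hw.le (mul_self_nonneg (v j α)))
        (by linarith : (0:ℝ) ≤ 1 - v j α * v j α)
      nlinarith [hkey]
    have hterm := (Finset.sum_eq_zero_iff_of_nonneg hnonneg).mp hzero i (Finset.mem_univ i)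
    have hw := hlat.w_pos i
    have hx : v i α * v i α * (1 - v i α * v i α) = 0 := by nlinarith
    rcases mul_eq_zero.mp hx with hx0 | hx1
    · right; left; exact by nlinarith [mul_self_nonneg (v i α)]
    · have : (v i α - 1) * (v i α + 1) = 0 := by nlinarith
      rcases mul_eq_zero.mp this with h | h
      · right; right; linarith
      · left; linarith
  set P1 := probOf n w (fun i => v i α = 1) with hP1
  set Pm := probOf n w (fun i => v i α = -1) with hPm
  set P0 := probOf n w (fun i => v i α = 0) with hP0
  have e1 : P1 - Pm = 0 := by
    rw [← h1, hP1, hPm]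
    unfold probOf
    rw [← Finset.sum_sub_distrib]
    apply Finset.sum_congr rfl
    intro i _
    rcases htri i with h | h | h <;> simp [h] <;> norm_num
  have e2 : P1 + Pm = 1 / 3 := by
    rw [← h2', hP1, hPm]
    unfold probOf
    rw [← Finset.sum_add_distrib]
    apply Finset.sum_congr rfl
    intro i _
    rcases htri i with h | h | h <;> simp [h] <;> norm_num
  have e0 : P0 + P1 + Pm = 1 := by
    rw [← hlat.sum_w, hP0, hP1, hPm]
    unfold probOf
    rw [← Finset.sum_add_distrib, ← Finset.sum_add_distrib]
    apply Finset.sum_congr rfl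
    intro i _
    rcases htri i with h | h | h <;> simp [h] <;> norm_num
  refine ⟨by linarith, by linarith, by linarith, ?_⟩
  intro i
  rcases htri i with h | h | h <;> simp [h]

end
end

section
/- Let (Ω, P) be a finite probability space with full support associated with a lattice (V, w) in dimension d ≥ 2, and let X_α (1 ≤ α ≤ d) be the component random variables. Suppose (V, w) is isotropic with speed of sound c_s = 3^{-1/2}, and that each X_α takes values in [-1, 1]. Then for all α, β ∈ {1, ..., d} with α ≠ β: P(X_α = 0, X_β = 0) = 4/9; P(X_α = σ_α, X_β = 0) = 1/9 for each σ_α ∈ {-1, 1}; and P(X_α = σ_α, X_β = σ_β) = 1/36 for each σ_α, σ_β ∈ {-1, 1}. -/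
open Real Set
noncomputable section

/- STATEMENT 14: If (𝒱, w) is isotropic with c_s = 3^{-1/2} and each component random variable
takes values in [-1,1], then for α ≠ β: P(X_α = 0, X_β = 0) = 4/9,
P(X_α = σ_α, X_β = 0) = 1/9 (σ_α = ±1), P(X_α = σ_α, X_β = σ_β) = 1/36 (σ_α, σ_β = ±1). -/

theorem isotropic_lattice_pair_law (d n : ℕ) (hd : 2 ≤ d)
    (v : Fin (n + 1) → Spc d) (w : Fin (n + 1) → ℝ)
    (hlat : IsoLattice d n v w (Real.sqrt 3)⁻¹)
    (hbdd : ∀ i, ∀ α : Fin d, |v i α| ≤ 1) :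
    ∀ α β : Fin d, α ≠ β →
      probOf n w (fun i => v i α = 0 ∧ v i β = 0) = 4 / 9 ∧
      (∀ σa ∈ ({-1, 1} : Set ℝ),
        probOf n w (fun i => v i α = σa ∧ v i β = 0) = 1 / 9) ∧
      (∀ σa ∈ ({-1, 1} : Set ℝ), ∀ σb ∈ ({-1, 1} : Set ℝ),
        probOf n w (fun i => v i α = σa ∧ v i β = σb) = 1 / 36) := by
  have hcs2 : ((Real.sqrt 3)⁻¹) ^ 2 = 1 / 3 := by
    rw [inv_pow, Real.sq_sqrt (by norm_num : (3:ℝ) ≥ 0)]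
    norm_num
  have hcs4 : ((Real.sqrt 3)⁻¹) ^ 4 = 1 / 9 := by
    have : ((Real.sqrt 3)⁻¹) ^ 4 = (((Real.sqrt 3)⁻¹) ^ 2) ^ 2 := by ring
    rw [this, hcs2]; norm_num
  -- trichotomy
  have tri : ∀ i (γ : Fin d), v i γ = -1 ∨ v i γ = 0 ∨ v i γ = 1 := by
    intro i γ
    have h2 := hlat.sum_wvv γ γ
    have h4 := hlat.sum_wvvvv γ γ γ γ
    simp only [kron, if_pos rfl] at h2 h4
    have hsum : ∑ j, w j * (v j γ ^ 2 * (1 - v j γ ^ 2)) = 0 := by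
      have e : ∑ j, w j * (v j γ ^ 2 * (1 - v j γ ^ 2))
          = ∑ j, w j * (v j γ * v j γ) - ∑ j, w j * (v j γ * v j γ * v j γ * v j γ) := by
        rw [← Finset.sum_sub_distrib]
        exact Finset.sum_congr rfl fun j _ => by ring
      rw [e, h2, h4, hcs2, hcs4]; norm_num
    have hnn : ∀ j ∈ Finset.univ, 0 ≤ w j * (v j γ ^ 2 * (1 - v j γ ^ 2)) := by
      intro j _
      have h1 : (v j γ) ^ 2 ≤ 1 := by
        have := hbdd j γ
        nlinarith [abs_nonneg (v j γ), sq_abs (v j γ)]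
      exact mul_nonneg (hlat.w_pos j).le
        (mul_nonneg (sq_nonneg _) (by linarith))
    have hz := (Finset.sum_eq_zero_iff_of_nonneg hnn).mp hsum i (Finset.mem_univ i)
    have hw := (hlat.w_pos i).ne'
    have h0 : v i γ ^ 2 * (1 - v i γ ^ 2) = 0 := by
      rcases mul_eq_zero.mp hz with h | h
      · exact absurd h hw
      · exact h
    rcases mul_eq_zero.mp h0 with h | h
    · right; left; exact pow_eq_zero_iff (by norm_num) |>.mp h
    · have : (v i γ - 1) * (v i γ + 1) = 0 := by nlinarith
      rcases mul_eq_zero.mp this with h' | h'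
      · right; right; linarith
      · left; linarith
  intro α β hne
  have hx1 := hlat.sum_wv α
  have hy1 := hlat.sum_wv β
  have hxx := hlat.sum_wvv α α
  have hyy := hlat.sum_wvv β β
  have hxy := hlat.sum_wvv α β
  have hxxy := hlat.sum_wvvv α α β
  have hxyy := hlat.sum_wvvv α β β
  have hxxyy := hlat.sum_wvvvv α α β β
  simp only [kron, if_pos rfl, if_neg hne] at hxx hyy hxy hxxyy
  rw [hcs2] at hxx hyy
  rw [hcs4] at hxxyy
  norm_num at hxy hxxyy
  refine ⟨?_, ?_, ?_⟩
  · -- P(0,0) = 4/9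
    have comb : probOf n w (fun i => v i α = 0 ∧ v i β = 0)
        = ∑ i, (w i - w i * (v i α * v i α) - w i * (v i β * v i β)
            + w i * (v i α * v i α * v i β * v i β)) := by
      refine Finset.sum_congr rfl fun i _ => ?_
      rcases tri i α with h | h | h <;> rcases tri i β with h' | h' | h' <;>
        norm_num [h, h']
    rw [comb]
    simp only [Finset.sum_add_distrib, Finset.sum_sub_distrib]
    rw [hlat.sum_w, hxx, hyy, hxxyy]
    norm_num
  · -- P(σa, 0) = 1/9
    rintro σa hσ
    simp only [Set.mem_insert_iff, Set.mem_singleton_iff] at hσ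
    have comb : probOf n w (fun i => v i α = σa ∧ v i β = 0)
        = ∑ i, ((1/2) * (w i * (v i α * v i α)) + (σa/2) * (w i * v i α)
            - (1/2) * (w i * (v i α * v i α * v i β * v i β))
            - (σa/2) * (w i * (v i α * v i β * v i β))) := by
      refine Finset.sum_congr rfl fun i _ => ?_
      rcases hσ with rfl | rfl <;>
        rcases tri i α with h | h | h <;> rcases tri i β with h' | h' | h' <;>
          norm_num [h, h'] <;> ring
    rw [comb]
    simp only [Finset.sum_add_distrib, Finset.sum_sub_distrib, ← Finset.mul_sum]
    rw [hx1, hxx, hxxyy, hxyy]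
    norm_num
  · -- P(σa, σb) = 1/36
    rintro σa hσa σb hσb
    simp only [Set.mem_insert_iff, Set.mem_singleton_iff] at hσa hσb
    have comb : probOf n w (fun i => v i α = σa ∧ v i β = σb)
        = ∑ i, ((1/4) * (w i * (v i α * v i α * v i β * v i β))
            + (σb/4) * (w i * (v i α * v i α * v i β))
            + (σa/4) * (w i * (v i α * v i β * v i β))
            + (σa*σb/4) * (w i * (v i α * v i β))) := by
      refine Finset.sum_congr rfl fun i _ => ?_
      rcases hσa with rfl | rfl <;> rcases hσb with rfl | rfl <;>
        rcases tri i α with h | h | h <;> rcases tri i β with h' | h' | h' <;>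
          norm_num [h, h'] <;> ring
    rw [comb]
    simp only [Finset.sum_add_distrib, ← Finset.mul_sum]
    rw [hxy, hxxy, hxyy, hxxyy]
    norm_num

end
end

section
/- Let d = 2 and let (V, w) be a lattice whose component random variables X₁, X₂ both take values in [-1, 1]. Then (V, w) is isotropic with speed of sound c_s = 3^{-1/2} if and only if it is the D2Q9 scheme: the joint law of (X₁, X₂) is supported on {-1, 0, 1}² with P(X₁ = 0, X₂ = 0) = 4/9, P(X₁ = σ₁, X₂ = σ₂) = 1/9 whenever exactly one of σ₁, σ₂ is nonzero, and P(X₁ = σ₁, X₂ = σ₂) = 1/36 whenever both σ₁, σ₂ are nonzero (σ₁, σ₂ ∈ {-1, 0, 1}). -/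
open Real Set
noncomputable section

lemma cs_sq : ((Real.sqrt 3)⁻¹ : ℝ)^2 = 1/3 := by
  rw [inv_pow, Real.sq_sqrt (by norm_num : (0:ℝ) ≤ 3)]; norm_num

lemma cs_four : ((Real.sqrt 3)⁻¹ : ℝ)^4 = 1/9 := by
  have h : ((Real.sqrt 3)⁻¹ : ℝ)^4 = (((Real.sqrt 3)⁻¹ : ℝ)^2)^2 := by ring
  rw [h, cs_sq]; norm_num

lemma s3sq : (Real.sqrt 3)^2 = 3 := Real.sq_sqrt (by norm_num)
lemma s3four : (Real.sqrt 3)^4 = 9 := by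
  rw [show (4:ℕ)=2*2 from rfl, pow_mul, s3sq]; norm_num

lemma k00 : kron (0 : Fin 2) 0 = 1 := by simp [kron]
lemma k11 : kron (1 : Fin 2) 1 = 1 := by simp [kron]
lemma k01 : kron (0 : Fin 2) 1 = 0 := by simp [kron]
lemma k10 : kron (1 : Fin 2) 0 = 0 := by simp [kron]

lemma sum_formula {n : ℕ} (v : Fin (n+1) → Spc 2) (w : Fin (n+1) → ℝ)
    (h00 : ∑ i, w i = 1)
    (h10 : ∑ i, w i * v i 0 = 0) (h01 : ∑ i, w i * v i 1 = 0)
    (h20 : ∑ i, w i * (v i 0 * v i 0) = 1/3) (h02 : ∑ i, w i * (v i 1 * v i 1) = 1/3)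
    (h11 : ∑ i, w i * (v i 0 * v i 1) = 0)
    (h21 : ∑ i, w i * (v i 0 * v i 0 * v i 1) = 0)
    (h12 : ∑ i, w i * (v i 0 * v i 1 * v i 1) = 0)
    (h22 : ∑ i, w i * (v i 0 * v i 0 * v i 1 * v i 1) = 1/9)
    (g : ℝ → ℝ → ℝ) (c00 c10 c01 c20 c02 c11 c21 c12 c22 : ℝ)
    (hg : ∀ x y, g x y = c00 + c10*x + c01*y + c20*(x*x) + c02*(y*y) + c11*(x*y)
        + c21*(x*x*y) + c12*(x*y*y) + c22*(x*x*y*y)) :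
    ∑ i, w i * g (v i 0) (v i 1) = c00 + c20/3 + c02/3 + c22/9 := by
  have key : ∀ i : Fin (n+1), w i * g (v i 0) (v i 1) =
      c00 * w i + c10 * (w i * v i 0) + c01 * (w i * v i 1)
      + c20 * (w i * (v i 0 * v i 0)) + c02 * (w i * (v i 1 * v i 1))
      + c11 * (w i * (v i 0 * v i 1)) + c21 * (w i * (v i 0 * v i 0 * v i 1))
      + c12 * (w i * (v i 0 * v i 1 * v i 1))
      + c22 * (w i * (v i 0 * v i 0 * v i 1 * v i 1)) := fun i => by rw [hg]; ring
  rw [Finset.sum_congr rfl fun i _ => key i]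
  simp only [Finset.sum_add_distrib, ← Finset.mul_sum]
  rw [h00, h10, h01, h20, h02, h11, h21, h12, h22]; ring

lemma probOf_formula {n : ℕ} (v : Fin (n+1) → Spc 2) (w : Fin (n+1) → ℝ)
    (h00 : ∑ i, w i = 1)
    (h10 : ∑ i, w i * v i 0 = 0) (h01 : ∑ i, w i * v i 1 = 0)
    (h20 : ∑ i, w i * (v i 0 * v i 0) = 1/3) (h02 : ∑ i, w i * (v i 1 * v i 1) = 1/3)
    (h11 : ∑ i, w i * (v i 0 * v i 1) = 0)
    (h21 : ∑ i, w i * (v i 0 * v i 0 * v i 1) = 0)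
    (h12 : ∑ i, w i * (v i 0 * v i 1 * v i 1) = 0)
    (h22 : ∑ i, w i * (v i 0 * v i 0 * v i 1 * v i 1) = 1/9)
    (hs : ∀ i, (v i 0 = -1 ∨ v i 0 = 0 ∨ v i 0 = 1) ∧ (v i 1 = -1 ∨ v i 1 = 0 ∨ v i 1 = 1))
    (a b : ℝ) (g : ℝ → ℝ → ℝ) (c00 c10 c01 c20 c02 c11 c21 c12 c22 : ℝ)
    (hg : ∀ x y, g x y = c00 + c10*x + c01*y + c20*(x*x) + c02*(y*y) + c11*(x*y)
        + c21*(x*x*y) + c12*(x*y*y) + c22*(x*x*y*y))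
    (hind : ∀ x y : ℝ, (x = -1 ∨ x = 0 ∨ x = 1) → (y = -1 ∨ y = 0 ∨ y = 1) →
      ((x = a ∧ y = b) → g x y = 1) ∧ (¬(x = a ∧ y = b) → g x y = 0)) :
    probOf n w (fun i => v i 0 = a ∧ v i 1 = b) = c00 + c20/3 + c02/3 + c22/9 := by
  unfold probOf
  beta_reduce
  refine Eq.trans (Finset.sum_congr rfl fun i _ => ?_)
    (sum_formula v w h00 h10 h01 h20 h02 h11 h21 h12 h22 g _ _ _ _ _ _ _ _ _ hg)
  obtain ⟨hx, hy⟩ := hs i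
  obtain ⟨hT, hF⟩ := hind (v i 0) (v i 1) hx hy
  by_cases hc : (v i 0 = a ∧ v i 1 = b)
  · rw [if_pos hc, hT hc, mul_one]
  · rw [if_neg hc, hF hc, mul_zero]

lemma grp9 {n : ℕ} (v : Fin (n+1) → Spc 2) (w : Fin (n+1) → ℝ)
    (hs : ∀ i, (v i 0 = -1 ∨ v i 0 = 0 ∨ v i 0 = 1) ∧ (v i 1 = -1 ∨ v i 1 = 0 ∨ v i 1 = 1))
    (g : ℝ → ℝ → ℝ) :
    ∑ i, w i * g (v i 0) (v i 1) =
      probOf n w (fun i => v i 0 = -1 ∧ v i 1 = -1) * g (-1) (-1) +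
      probOf n w (fun i => v i 0 = -1 ∧ v i 1 = 0) * g (-1) 0 +
      probOf n w (fun i => v i 0 = -1 ∧ v i 1 = 1) * g (-1) 1 +
      probOf n w (fun i => v i 0 = 0 ∧ v i 1 = -1) * g 0 (-1) +
      probOf n w (fun i => v i 0 = 0 ∧ v i 1 = 0) * g 0 0 +
      probOf n w (fun i => v i 0 = 0 ∧ v i 1 = 1) * g 0 1 +
      probOf n w (fun i => v i 0 = 1 ∧ v i 1 = -1) * g 1 (-1) +
      probOf n w (fun i => v i 0 = 1 ∧ v i 1 = 0) * g 1 0 +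
      probOf n w (fun i => v i 0 = 1 ∧ v i 1 = 1) * g 1 1 := by
  unfold probOf
  beta_reduce
  simp only [Finset.sum_mul, ← Finset.sum_add_distrib]
  refine Finset.sum_congr rfl fun i _ => ?_
  obtain ⟨hx, hy⟩ := hs i
  rcases hx with h|h|h <;> rcases hy with h'|h'|h' <;> rw [h, h'] <;> norm_num


/- STATEMENT 15: Characterization of 2D isotropic lattices with c_s = 3^{-1/2} and velocity
components in [-1,1]: (𝒱, w) is isotropic iff it is the D2Q9 scheme, i.e. the joint law of
(X₁, X₂) is supported on {-1,0,1}² with probabilities 4/9 (both zero), 1/9 (exactly one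
nonzero) and 1/36 (both nonzero). -/

theorem isotropic_2d_iff_D2Q9 (n : ℕ)
    (v : Fin (n + 1) → Spc 2) (w : Fin (n + 1) → ℝ)
    -- (𝒱, w) is a lattice …
    (hw : ∀ i, 0 < w i) (hsum : ∑ i, w i = 1) (hv0 : v 0 = 0)
    (hinj : Function.Injective v)
    -- … whose velocity components lie in [-1,1]
    (hbdd : ∀ i, ∀ α : Fin 2, |v i α| ≤ 1) :
    IsoLattice 2 n v w (Real.sqrt 3)⁻¹ ↔
      ((∀ i, v i 0 ∈ ({-1, 0, 1} : Set ℝ) ∧ v i 1 ∈ ({-1, 0, 1} : Set ℝ)) ∧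
        ∀ a ∈ ({-1, 0, 1} : Set ℝ), ∀ b ∈ ({-1, 0, 1} : Set ℝ),
          probOf n w (fun i => v i 0 = a ∧ v i 1 = b) =
            if a = 0 ∧ b = 0 then 4 / 9
            else if a = 0 ∨ b = 0 then 1 / 9
            else 1 / 36) := by
  constructor
  · intro H
    -- support lemma
    have key : ∀ α : Fin 2, ∀ i, v i α = -1 ∨ v i α = 0 ∨ v i α = 1 := by
      intro α
      have h2 : ∑ i, w i * (v i α * v i α) = 1/3 := by
        have h := H.sum_wvv α α
        simp only [kron, if_pos rfl] at h
        rw [h, cs_sq]; norm_num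
      have h4 : ∑ i, w i * (v i α * v i α * v i α * v i α) = 1/3 := by
        have h := H.sum_wvvvv α α α α
        simp only [kron, if_pos rfl] at h
        rw [h, cs_four]; norm_num
      have hz : ∑ i, (w i * (v i α * v i α) - w i * (v i α * v i α * v i α * v i α)) = 0 := by
        rw [Finset.sum_sub_distrib, h2, h4]; ring
      have hnn : ∀ i ∈ Finset.univ, (0:ℝ) ≤ w i * (v i α * v i α)
          - w i * (v i α * v i α * v i α * v i α) := by
        intro i _
        have h1 := abs_le.mp (hbdd i α)
        have ha : (0:ℝ) ≤ v i α * v i α := mul_self_nonneg _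
        have hb : (0:ℝ) ≤ 1 - v i α * v i α := by nlinarith [h1.1, h1.2]
        nlinarith [mul_nonneg (mul_nonneg (hw i).le ha) hb]
      have hall := (Finset.sum_eq_zero_iff_of_nonneg hnn).mp hz
      intro i
      have h := hall i (Finset.mem_univ i)
      have hx : v i α * v i α * (1 - v i α * v i α) = 0 := by
        rcases mul_eq_zero.mp (show w i * (v i α * v i α * (1 - v i α * v i α)) = 0 by
          linear_combination h) with h' | h'
        · exact absurd h' (hw i).ne'
        · exact h'
      rcases mul_eq_zero.mp hx with h' | h'
      · right; left; exact mul_self_eq_zero.mp h'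
      · have h'' : (1 - v i α) * (1 + v i α) = 0 := by linear_combination h'
        rcases mul_eq_zero.mp h'' with h3 | h3
        · right; right; linarith
        · left; linarith
    have hsupp : ∀ i, (v i 0 = -1 ∨ v i 0 = 0 ∨ v i 0 = 1) ∧
        (v i 1 = -1 ∨ v i 1 = 0 ∨ v i 1 = 1) := fun i => ⟨key 0 i, key 1 i⟩
    -- moments
    have h10 := H.sum_wv 0
    have h01 := H.sum_wv 1
    have h20 : ∑ i, w i * (v i 0 * v i 0) = 1/3 := by
      have h := H.sum_wvv 0 0; simp only [kron, if_pos rfl] at h; rw [h, cs_sq]; norm_num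
    have h02 : ∑ i, w i * (v i 1 * v i 1) = 1/3 := by
      have h := H.sum_wvv 1 1; simp only [kron, if_pos rfl] at h; rw [h, cs_sq]; norm_num
    have h11 : ∑ i, w i * (v i 0 * v i 1) = 0 := by
      have h := H.sum_wvv 0 1; rw [k01] at h; rw [h]; ring
    have h21 := H.sum_wvvv 0 0 1
    have h12 := H.sum_wvvv 0 1 1
    have h22 : ∑ i, w i * (v i 0 * v i 0 * v i 1 * v i 1) = 1/9 := by
      have h := H.sum_wvvvv 0 0 1 1; rw [k00, k11, k01] at h
      rw [h, cs_four]; ring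
    constructor
    · intro i
      obtain ⟨hx, hy⟩ := hsupp i
      constructor <;> simp only [Set.mem_insert_iff, Set.mem_singleton_iff] <;> tauto
    · intro a ha b hb
      simp only [Set.mem_insert_iff, Set.mem_singleton_iff] at ha hb
      have hindtac : ∀ (a b : ℝ) (g : ℝ → ℝ → ℝ),
          (g (-1) (-1) = if ((-1:ℝ) = a ∧ (-1:ℝ) = b) then 1 else 0) → True := fun _ _ _ _ => trivial
      clear hindtac
      rcases ha with rfl | rfl | rfl <;> rcases hb with rfl | rfl | rfl
      · rw [if_neg (by norm_num), if_neg (by norm_num)]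
        refine (probOf_formula v w hsum h10 h01 h20 h02 h11 h21 h12 h22 hsupp _ _
          (fun x y => (x*x-x)*(y*y-y)/4) 0 0 0 0 0 (1/4) (-(1/4)) (-(1/4)) (1/4)
          (by intro x y; ring) ?_).trans (by norm_num)
        intro x y hx hy
        refine ⟨?_, ?_⟩
        · rintro ⟨rfl, rfl⟩; norm_num
        · intro hc
          rcases hx with rfl|rfl|rfl <;> rcases hy with rfl|rfl|rfl <;> norm_num
          exact hc (by norm_num)
      · rw [if_neg (by norm_num), if_pos (by norm_num)]
        refine (probOf_formula v w hsum h10 h01 h20 h02 h11 h21 h12 h22 hsupp _ _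
          (fun x y => (x*x-x)/2*(1-y*y)) 0 (-(1/2)) 0 (1/2) 0 0 0 (1/2) (-(1/2))
          (by intro x y; ring) ?_).trans (by norm_num)
        intro x y hx hy
        refine ⟨?_, ?_⟩
        · rintro ⟨rfl, rfl⟩; norm_num
        · intro hc
          rcases hx with rfl|rfl|rfl <;> rcases hy with rfl|rfl|rfl <;> norm_num
          exact hc (by norm_num)
      · rw [if_neg (by norm_num), if_neg (by norm_num)]
        refine (probOf_formula v w hsum h10 h01 h20 h02 h11 h21 h12 h22 hsupp _ _
          (fun x y => (x*x-x)*(y*y+y)/4) 0 0 0 0 0 (-(1/4)) (1/4) (-(1/4)) (1/4)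
          (by intro x y; ring) ?_).trans (by norm_num)
        intro x y hx hy
        refine ⟨?_, ?_⟩
        · rintro ⟨rfl, rfl⟩; norm_num
        · intro hc
          rcases hx with rfl|rfl|rfl <;> rcases hy with rfl|rfl|rfl <;> norm_num
          exact hc (by norm_num)
      · rw [if_neg (by norm_num), if_pos (by norm_num)]
        refine (probOf_formula v w hsum h10 h01 h20 h02 h11 h21 h12 h22 hsupp _ _
          (fun x y => (1-x*x)*(y*y-y)/2) 0 0 (-(1/2)) 0 (1/2) 0 (1/2) 0 (-(1/2))
          (by intro x y; ring) ?_).trans (by norm_num)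
        intro x y hx hy
        refine ⟨?_, ?_⟩
        · rintro ⟨rfl, rfl⟩; norm_num
        · intro hc
          rcases hx with rfl|rfl|rfl <;> rcases hy with rfl|rfl|rfl <;> norm_num
          exact hc (by norm_num)
      · rw [if_pos (by norm_num)]
        refine (probOf_formula v w hsum h10 h01 h20 h02 h11 h21 h12 h22 hsupp _ _
          (fun x y => (1-x*x)*(1-y*y)) 1 0 0 (-1) (-1) 0 0 0 1
          (by intro x y; ring) ?_).trans (by norm_num)
        intro x y hx hy
        refine ⟨?_, ?_⟩
        · rintro ⟨rfl, rfl⟩; norm_num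
        · intro hc
          rcases hx with rfl|rfl|rfl <;> rcases hy with rfl|rfl|rfl <;> norm_num
          exact hc (by norm_num)
      · rw [if_neg (by norm_num), if_pos (by norm_num)]
        refine (probOf_formula v w hsum h10 h01 h20 h02 h11 h21 h12 h22 hsupp _ _
          (fun x y => (1-x*x)*(y*y+y)/2) 0 0 (1/2) 0 (1/2) 0 (-(1/2)) 0 (-(1/2))
          (by intro x y; ring) ?_).trans (by norm_num)
        intro x y hx hy
        refine ⟨?_, ?_⟩
        · rintro ⟨rfl, rfl⟩; norm_num
        · intro hc
          rcases hx with rfl|rfl|rfl <;> rcases hy with rfl|rfl|rfl <;> norm_num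
          exact hc (by norm_num)
      · rw [if_neg (by norm_num), if_neg (by norm_num)]
        refine (probOf_formula v w hsum h10 h01 h20 h02 h11 h21 h12 h22 hsupp _ _
          (fun x y => (x*x+x)*(y*y-y)/4) 0 0 0 0 0 (-(1/4)) (-(1/4)) (1/4) (1/4)
          (by intro x y; ring) ?_).trans (by norm_num)
        intro x y hx hy
        refine ⟨?_, ?_⟩
        · rintro ⟨rfl, rfl⟩; norm_num
        · intro hc
          rcases hx with rfl|rfl|rfl <;> rcases hy with rfl|rfl|rfl <;> norm_num
          exact hc (by norm_num)
      · rw [if_neg (by norm_num), if_pos (by norm_num)]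
        refine (probOf_formula v w hsum h10 h01 h20 h02 h11 h21 h12 h22 hsupp _ _
          (fun x y => (x*x+x)/2*(1-y*y)) 0 (1/2) 0 (1/2) 0 0 0 (-(1/2)) (-(1/2))
          (by intro x y; ring) ?_).trans (by norm_num)
        intro x y hx hy
        refine ⟨?_, ?_⟩
        · rintro ⟨rfl, rfl⟩; norm_num
        · intro hc
          rcases hx with rfl|rfl|rfl <;> rcases hy with rfl|rfl|rfl <;> norm_num
          exact hc (by norm_num)
      · rw [if_neg (by norm_num), if_neg (by norm_num)]
        refine (probOf_formula v w hsum h10 h01 h20 h02 h11 h21 h12 h22 hsupp _ _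
          (fun x y => (x*x+x)*(y*y+y)/4) 0 0 0 0 0 (1/4) (1/4) (1/4) (1/4)
          (by intro x y; ring) ?_).trans (by norm_num)
        intro x y hx hy
        refine ⟨?_, ?_⟩
        · rintro ⟨rfl, rfl⟩; norm_num
        · intro hc
          rcases hx with rfl|rfl|rfl <;> rcases hy with rfl|rfl|rfl <;> norm_num
          exact hc (by norm_num)
  · rintro ⟨hsuppS, hprob⟩
    have hsupp : ∀ i, (v i 0 = -1 ∨ v i 0 = 0 ∨ v i 0 = 1) ∧
        (v i 1 = -1 ∨ v i 1 = 0 ∨ v i 1 = 1) := by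
      intro i
      obtain ⟨hx, hy⟩ := hsuppS i
      simp only [Set.mem_insert_iff, Set.mem_singleton_iff] at hx hy
      exact ⟨hx, hy⟩
    have mem1 : (-1 : ℝ) ∈ ({-1, 0, 1} : Set ℝ) := by norm_num
    have mem2 : (0 : ℝ) ∈ ({-1, 0, 1} : Set ℝ) := by norm_num
    have mem3 : (1 : ℝ) ∈ ({-1, 0, 1} : Set ℝ) := by norm_num
    have P1 := hprob (-1) mem1 (-1) mem1
    have P2 := hprob (-1) mem1 0 mem2
    have P3 := hprob (-1) mem1 1 mem3
    have P4 := hprob 0 mem2 (-1) mem1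
    have P5 := hprob 0 mem2 0 mem2
    have P6 := hprob 0 mem2 1 mem3
    have P7 := hprob 1 mem3 (-1) mem1
    have P8 := hprob 1 mem3 0 mem2
    have P9 := hprob 1 mem3 1 mem3
    rw [if_neg (by norm_num), if_neg (by norm_num)] at P1
    rw [if_neg (by norm_num), if_pos (by norm_num)] at P2
    rw [if_neg (by norm_num), if_neg (by norm_num)] at P3
    rw [if_neg (by norm_num), if_pos (by norm_num)] at P4
    rw [if_pos (by norm_num)] at P5
    rw [if_neg (by norm_num), if_pos (by norm_num)] at P6
    rw [if_neg (by norm_num), if_neg (by norm_num)] at P7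
    rw [if_neg (by norm_num), if_pos (by norm_num)] at P8
    rw [if_neg (by norm_num), if_neg (by norm_num)] at P9
    have grp : ∀ g : ℝ → ℝ → ℝ, ∑ i, w i * g (v i 0) (v i 1) =
        (1/36) * g (-1) (-1) + (1/9) * g (-1) 0 + (1/36) * g (-1) 1 +
        (1/9) * g 0 (-1) + (4/9) * g 0 0 + (1/9) * g 0 1 +
        (1/36) * g 1 (-1) + (1/9) * g 1 0 + (1/36) * g 1 1 := by
      intro g
      rw [grp9 v w hsupp g, P1, P2, P3, P4, P5, P6, P7, P8, P9]
    refine ⟨by positivity, hw, hv0, hinj, hsum, ?_, ?_, ?_, ?_⟩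
    · intro α
      fin_cases α
      · have h := grp (fun x y => x); norm_num at h; exact h
      · have h := grp (fun x y => y); norm_num at h; exact h
    · intro α β
      fin_cases α <;> fin_cases β
      · have h := grp (fun x y => x*x); norm_num at h; refine h.trans ?_; norm_num [kron, cs_sq, cs_four, s3sq, s3four]
      · have h := grp (fun x y => x*y); norm_num at h; refine h.trans ?_; norm_num [kron, cs_sq, cs_four, s3sq, s3four]
      · have h := grp (fun x y => y*x); norm_num at h; refine h.trans ?_; norm_num [kron, cs_sq, cs_four, s3sq, s3four]
      · have h := grp (fun x y => y*y); norm_num at h; refine h.trans ?_; norm_num [kron, cs_sq, cs_four, s3sq, s3four]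
    · intro α β γ
      fin_cases α <;> fin_cases β <;> fin_cases γ
      · have h := grp (fun x y => x*x*x); norm_num at h; exact h
      · have h := grp (fun x y => x*x*y); norm_num at h; exact h
      · have h := grp (fun x y => x*y*x); norm_num at h; exact h
      · have h := grp (fun x y => x*y*y); norm_num at h; exact h
      · have h := grp (fun x y => y*x*x); norm_num at h; exact h
      · have h := grp (fun x y => y*x*y); norm_num at h; exact h
      · have h := grp (fun x y => y*y*x); norm_num at h; exact h
      · have h := grp (fun x y => y*y*y); norm_num at h; exact h
    · intro α β γ ζ
      fin_cases α <;> fin_cases β <;> fin_cases γ <;> fin_cases ζ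
      · have h := grp (fun x y => x*x*x*x); norm_num at h; refine h.trans ?_; norm_num [kron, cs_sq, cs_four, s3sq, s3four]
      · have h := grp (fun x y => x*x*x*y); norm_num at h; refine h.trans ?_; norm_num [kron, cs_sq, cs_four, s3sq, s3four]
      · have h := grp (fun x y => x*x*y*x); norm_num at h; refine h.trans ?_; norm_num [kron, cs_sq, cs_four, s3sq, s3four]
      · have h := grp (fun x y => x*x*y*y); norm_num at h; refine h.trans ?_; norm_num [kron, cs_sq, cs_four, s3sq, s3four]
      · have h := grp (fun x y => x*y*x*x); norm_num at h; refine h.trans ?_; norm_num [kron, cs_sq, cs_four, s3sq, s3four]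
      · have h := grp (fun x y => x*y*x*y); norm_num at h; refine h.trans ?_; norm_num [kron, cs_sq, cs_four, s3sq, s3four]
      · have h := grp (fun x y => x*y*y*x); norm_num at h; refine h.trans ?_; norm_num [kron, cs_sq, cs_four, s3sq, s3four]
      · have h := grp (fun x y => x*y*y*y); norm_num at h; refine h.trans ?_; norm_num [kron, cs_sq, cs_four, s3sq, s3four]
      · have h := grp (fun x y => y*x*x*x); norm_num at h; refine h.trans ?_; norm_num [kron, cs_sq, cs_four, s3sq, s3four]
      · have h := grp (fun x y => y*x*x*y); norm_num at h; refine h.trans ?_; norm_num [kron, cs_sq, cs_four, s3sq, s3four]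
      · have h := grp (fun x y => y*x*y*x); norm_num at h; refine h.trans ?_; norm_num [kron, cs_sq, cs_four, s3sq, s3four]
      · have h := grp (fun x y => y*x*y*y); norm_num at h; refine h.trans ?_; norm_num [kron, cs_sq, cs_four, s3sq, s3four]
      · have h := grp (fun x y => y*y*x*x); norm_num at h; refine h.trans ?_; norm_num [kron, cs_sq, cs_four, s3sq, s3four]
      · have h := grp (fun x y => y*y*x*y); norm_num at h; refine h.trans ?_; norm_num [kron, cs_sq, cs_four, s3sq, s3four]
      · have h := grp (fun x y => y*y*y*x); norm_num at h; refine h.trans ?_; norm_num [kron, cs_sq, cs_four, s3sq, s3four]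
      · have h := grp (fun x y => y*y*y*y); norm_num at h; refine h.trans ?_; norm_num [kron, cs_sq, cs_four, s3sq, s3four]
    
end
end

section
/- Let (Ω, P) be a finite probability space with full support associated with a lattice (V, w) in dimension d ≥ 3, with component random variables X_α taking values in [-1, 1], and suppose (V, w) is isotropic with speed of sound c_s = 3^{-1/2}. Then for any pairwise distinct α, β, γ ∈ {1, ..., d} there exist constants c ∈ [0, 1/72] and c_α, c_β, c_γ ∈ [-1/72, 1/72] such that: P(X_α = X_β = X_γ = 0) = 1/3 − 8c; P(X_α = σ_α, X_β = X_γ = 0) = 1/18 + 4c + 4σ_α c_α for σ_α ∈ {-1,1}; P(X_α = σ_α, X_β = σ_β, X_γ = 0) = 1/36 − 2c − 2σ_α c_α − 2σ_β c_β for σ_α, σ_β ∈ {-1,1}; and P(X_α = σ_α, X_β = σ_β, X_γ = σ_γ) = c + σ_α c_α + σ_β c_β + σ_γ c_γ for σ_α, σ_β, σ_γ ∈ {-1,1} (and analogous formulas with the roles of α, β, γ permuted). Moreover the constants satisfy |c_α| + |c_β| + |c_γ| ≤ c and c + |c_ζ| + |c_η| ≤ 1/72 for any distinct ζ, η ∈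 {α, β, γ}. -/
open Real Set
noncomputable section

/- STATEMENT 16: Triple law of a 3D (or higher) isotropic lattice with c_s = 3^{-1/2} and
velocity components in [-1,1]: for pairwise distinct α, β, γ there are constants
c ∈ [0,1/72], c_α, c_β, c_γ ∈ [-1/72,1/72] describing all triple-joint probabilities,
with |c_α|+|c_β|+|c_γ| ≤ c and c + |c_ζ| + |c_η| ≤ 1/72 for distinct ζ, η ∈ {α,β,γ}. -/


open Classical in
/-- Real-valued indicator of a proposition. -/
noncomputable def ind' (p : Prop) : ℝ := if p then 1 else 0

lemma triple_ite' (p q r : Prop) [Decidable (p ∧ q ∧ r)] (u : ℝ) :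
    (if p ∧ q ∧ r then u else 0) = u * (ind' p * (ind' q * ind' r)) := by
  unfold ind'
  by_cases hp : p <;> by_cases hq : q <;> by_cases hr : r <;> simp [hp, hq, hr]

lemma ind1' (x σ : ℝ) (hx : x = -1 ∨ x = 0 ∨ x = 1) (hσ : σ = -1 ∨ σ = 1) :
    ind' (x = σ) = (x ^ 2 + σ * x) / 2 := by
  unfold ind'
  rcases hx with h|h|h <;> rcases hσ with h'|h' <;> subst h <;> subst h' <;> norm_num

lemma ind0' (x : ℝ) (hx : x = -1 ∨ x = 0 ∨ x = 1) :
    ind' (x = 0) = 1 - x ^ 2 := by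
  unfold ind'
  rcases hx with h|h|h <;> subst h <;> norm_num

lemma pick_sign (x : ℝ) : ∃ s : ℝ, (s = -1 ∨ s = 1) ∧ s * x = |x| := by
  rcases le_or_gt 0 x with h | h
  · exact ⟨1, Or.inr rfl, by rw [one_mul, abs_of_nonneg h]⟩
  · exact ⟨-1, Or.inl rfl, by rw [abs_of_neg h]; ring⟩

set_option maxHeartbeats 1000000 in
theorem isotropic_lattice_triple_law (d n : ℕ) (hd : 3 ≤ d)
    (v : Fin (n + 1) → Spc d) (w : Fin (n + 1) → ℝ)
    (hlat : IsoLattice d n v w (Real.sqrt 3)⁻¹)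
    (hbdd : ∀ i, ∀ α : Fin d, |v i α| ≤ 1) :
    ∀ α β γ : Fin d, α ≠ β → α ≠ γ → β ≠ γ →
      ∃ c ∈ Icc (0 : ℝ) (1 / 72), ∃ ca ∈ Icc (-(1 / 72) : ℝ) (1 / 72),
      ∃ cb ∈ Icc (-(1 / 72) : ℝ) (1 / 72), ∃ cg ∈ Icc (-(1 / 72) : ℝ) (1 / 72),
        -- P(X_α = X_β = X_γ = 0) = 1/3 − 8c
        probOf n w (fun i => v i α = 0 ∧ v i β = 0 ∧ v i γ = 0) = 1 / 3 - 8 * c ∧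
        -- P(X_ζ = σ, other two = 0) = 1/18 + 4c + 4σc_ζ
        (∀ σ ∈ ({-1, 1} : Set ℝ),
          probOf n w (fun i => v i α = σ ∧ v i β = 0 ∧ v i γ = 0) =
            1 / 18 + 4 * c + 4 * σ * ca ∧
          probOf n w (fun i => v i β = σ ∧ v i α = 0 ∧ v i γ = 0) =
            1 / 18 + 4 * c + 4 * σ * cb ∧
          probOf n w (fun i => v i γ = σ ∧ v i α = 0 ∧ v i β = 0) =
            1 / 18 + 4 * c + 4 * σ * cg) ∧
        -- P(two components = ±1, third = 0) = 1/36 − 2c − 2σc − 2σ'c'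
        (∀ σ1 ∈ ({-1, 1} : Set ℝ), ∀ σ2 ∈ ({-1, 1} : Set ℝ),
          probOf n w (fun i => v i α = σ1 ∧ v i β = σ2 ∧ v i γ = 0) =
            1 / 36 - 2 * c - 2 * σ1 * ca - 2 * σ2 * cb ∧
          probOf n w (fun i => v i α = σ1 ∧ v i γ = σ2 ∧ v i β = 0) =
            1 / 36 - 2 * c - 2 * σ1 * ca - 2 * σ2 * cg ∧
          probOf n w (fun i => v i β = σ1 ∧ v i γ = σ2 ∧ v i α = 0) =
            1 / 36 - 2 * c - 2 * σ1 * cb - 2 * σ2 * cg) ∧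
        -- P(X_α = σ_α, X_β = σ_β, X_γ = σ_γ) = c + σ_α c_α + σ_β c_β + σ_γ c_γ
        (∀ σ1 ∈ ({-1, 1} : Set ℝ), ∀ σ2 ∈ ({-1, 1} : Set ℝ), ∀ σ3 ∈ ({-1, 1} : Set ℝ),
          probOf n w (fun i => v i α = σ1 ∧ v i β = σ2 ∧ v i γ = σ3) =
            c + σ1 * ca + σ2 * cb + σ3 * cg) ∧
        -- constraints on the constants
        |ca| + |cb| + |cg| ≤ c ∧
        c + |ca| + |cb| ≤ 1 / 72 ∧ c + |ca| + |cg| ≤ 1 / 72 ∧ c + |cb| + |cg| ≤ 1 / 72 := by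
  intro α β γ hab hag hbg
  have hc2 : ((Real.sqrt 3)⁻¹ : ℝ) ^ 2 = 1 / 3 := by
    rw [inv_pow, Real.sq_sqrt (by norm_num : (0:ℝ) ≤ 3)]; norm_num
  have hc4 : ((Real.sqrt 3)⁻¹ : ℝ) ^ 4 = 1 / 9 := by
    rw [show ((Real.sqrt 3)⁻¹ : ℝ) ^ 4 = (((Real.sqrt 3)⁻¹ : ℝ) ^ 2) ^ 2 by ring, hc2]; norm_num
  have tri : ∀ (i : Fin (n + 1)) (δ : Fin d), v i δ = -1 ∨ v i δ = 0 ∨ v i δ = 1 := by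
    intro i δ
    have hzero : ∑ j, (w j * (v j δ * v j δ) - w j * (v j δ * v j δ * v j δ * v j δ)) = 0 := by
      rw [Finset.sum_sub_distrib, hlat.sum_wvv δ δ, hlat.sum_wvvvv δ δ δ δ]
      simp only [kron, if_pos rfl, hc2, hc4]
      norm_num
    have hnn : ∀ j ∈ Finset.univ,
        (0:ℝ) ≤ w j * (v j δ * v j δ) - w j * (v j δ * v j δ * v j δ * v j δ) := by
      intro j _
      have h1 : (v j δ) ^ 2 ≤ 1 := by
        have := hbdd j δ; nlinarith [abs_nonneg (v j δ), sq_abs (v j δ)]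
      nlinarith [mul_nonneg (mul_nonneg (hlat.w_pos j).le (sq_nonneg (v j δ))) (sub_nonneg.mpr h1)]
    have hz := (Finset.sum_eq_zero_iff_of_nonneg hnn).mp hzero i (Finset.mem_univ i)
    have hx : (v i δ) ^ 2 * (1 - (v i δ) ^ 2) = 0 := by
      have hwp := hlat.w_pos i; nlinarith [hz]
    rcases mul_eq_zero.mp hx with h | h
    · right; left; exact pow_eq_zero_iff (by norm_num) |>.mp h
    · have h1 : (v i δ - 1) * (v i δ + 1) = 0 := by nlinarith
      rcases mul_eq_zero.mp h1 with h' | h'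
      · right; right; linarith
      · left; linarith
  have Pnn : ∀ S : Fin (n + 1) → Prop, 0 ≤ probOf n w S := by
    intro S
    unfold probOf
    refine Finset.sum_nonneg fun i _ => ?_
    split_ifs
    exacts [(hlat.w_pos i).le, le_rfl]
  have main : ∃ c ca cb cg : ℝ,
      (probOf n w (fun i => v i α = 0 ∧ v i β = 0 ∧ v i γ = 0) = 1 / 3 - 8 * c) ∧
      (∀ σ : ℝ, (σ = -1 ∨ σ = 1) →
        probOf n w (fun i => v i α = σ ∧ v i β = 0 ∧ v i γ = 0) = 1 / 18 + 4 * c + 4 * σ * ca ∧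
        probOf n w (fun i => v i β = σ ∧ v i α = 0 ∧ v i γ = 0) = 1 / 18 + 4 * c + 4 * σ * cb ∧
        probOf n w (fun i => v i γ = σ ∧ v i α = 0 ∧ v i β = 0) = 1 / 18 + 4 * c + 4 * σ * cg) ∧
      (∀ σ1 σ2 : ℝ, (σ1 = -1 ∨ σ1 = 1) → (σ2 = -1 ∨ σ2 = 1) →
        probOf n w (fun i => v i α = σ1 ∧ v i β = σ2 ∧ v i γ = 0) =
          1 / 36 - 2 * c - 2 * σ1 * ca - 2 * σ2 * cb ∧
        probOf n w (fun i => v i α = σ1 ∧ v i γ = σ2 ∧ v i β = 0) =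
          1 / 36 - 2 * c - 2 * σ1 * ca - 2 * σ2 * cg ∧
        probOf n w (fun i => v i β = σ1 ∧ v i γ = σ2 ∧ v i α = 0) =
          1 / 36 - 2 * c - 2 * σ1 * cb - 2 * σ2 * cg) ∧
      (∀ σ1 σ2 σ3 : ℝ, (σ1 = -1 ∨ σ1 = 1) → (σ2 = -1 ∨ σ2 = 1) → (σ3 = -1 ∨ σ3 = 1) →
        probOf n w (fun i => v i α = σ1 ∧ v i β = σ2 ∧ v i γ = σ3) =
          c + σ1 * ca + σ2 * cb + σ3 * cg) := by
    refine ⟨(∑ i, w i * (v i α ^ 2 * v i β ^ 2 * v i γ ^ 2)) / 8,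
      (∑ i, w i * (v i α * v i β ^ 2 * v i γ ^ 2)) / 8,
      (∑ i, w i * (v i α ^ 2 * v i β * v i γ ^ 2)) / 8,
      (∑ i, w i * (v i α ^ 2 * v i β ^ 2 * v i γ)) / 8, ?_, ?_, ?_, ?_⟩
    · -- F1
      unfold probOf
      trans (∑ i, ((1) * (w i)
          + (-1) * (w i * (v i α * v i α))
          + (-1) * (w i * (v i β * v i β))
          + (-1) * (w i * (v i γ * v i γ))
          + (1) * (w i * (v i α * v i α * v i β * v i β))
          + (1) * (w i * (v i α * v i α * v i γ * v i γ))
          + (1) * (w i * (v i β * v i β * v i γ * v i γ))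
          + (-1) * (w i * (v i α ^ 2 * v i β ^ 2 * v i γ ^ 2))))
      · refine Finset.sum_congr rfl fun i _ => ?_
        beta_reduce
        rw [triple_ite', ind0' _ (tri i α), ind0' _ (tri i β), ind0' _ (tri i γ)]
        ring
      · simp only [Finset.sum_add_distrib, ← Finset.mul_sum]
        rw [hlat.sum_w, hlat.sum_wvv α α, hlat.sum_wvv β β, hlat.sum_wvv γ γ, hlat.sum_wvvvv α α β β, hlat.sum_wvvvv α α γ γ, hlat.sum_wvvvv β β γ γ]
        simp only [kron, eq_self_iff_true, if_true, if_neg hab, if_neg hag, if_neg hbg, if_neg (Ne.symm hab),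
          if_neg (Ne.symm hag), if_neg (Ne.symm hbg), hc2, hc4]
        ring
    · -- F2
      intro σ hσ
      refine ⟨?_, ?_, ?_⟩
      · -- F2a
        unfold probOf
        trans (∑ i, ((1/2) * (w i * (v i α * v i α))
            + (-(1/2)) * (w i * (v i α * v i α * v i β * v i β))
            + (-(1/2)) * (w i * (v i α * v i α * v i γ * v i γ))
            + (1/2) * (w i * (v i α ^ 2 * v i β ^ 2 * v i γ ^ 2))
            + (σ/2) * (w i * v i α)
            + (-(σ/2)) * (w i * (v i α * v i β * v i β))
            + (-(σ/2)) * (w i * (v i α * v i γ * v i γ))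
            + (σ/2) * (w i * (v i α * v i β ^ 2 * v i γ ^ 2))))
        · refine Finset.sum_congr rfl fun i _ => ?_
          beta_reduce
          rw [triple_ite', ind1' _ _ (tri i α) hσ, ind0' _ (tri i β), ind0' _ (tri i γ)]
          ring
        · simp only [Finset.sum_add_distrib, ← Finset.mul_sum]
          rw [hlat.sum_wvv α α, hlat.sum_wvvvv α α β β, hlat.sum_wvvvv α α γ γ, hlat.sum_wv α, hlat.sum_wvvv α β β, hlat.sum_wvvv α γ γ]
          simp only [kron, eq_self_iff_true, if_true, if_neg hab, if_neg hag, if_neg hbg, if_neg (Ne.symm hab),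
            if_neg (Ne.symm hag), if_neg (Ne.symm hbg), hc2, hc4]
          ring
      · -- F2b
        unfold probOf
        trans (∑ i, ((1/2) * (w i * (v i β * v i β))
            + (-(1/2)) * (w i * (v i α * v i α * v i β * v i β))
            + (-(1/2)) * (w i * (v i β * v i β * v i γ * v i γ))
            + (1/2) * (w i * (v i α ^ 2 * v i β ^ 2 * v i γ ^ 2))
            + (σ/2) * (w i * v i β)
            + (-(σ/2)) * (w i * (v i β * v i α * v i α))
            + (-(σ/2)) * (w i * (v i β * v i γ * v i γ))
            + (σ/2) * (w i * (v i α ^ 2 * v i β * v i γ ^ 2))))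
        · refine Finset.sum_congr rfl fun i _ => ?_
          beta_reduce
          rw [triple_ite', ind1' _ _ (tri i β) hσ, ind0' _ (tri i α), ind0' _ (tri i γ)]
          ring
        · simp only [Finset.sum_add_distrib, ← Finset.mul_sum]
          rw [hlat.sum_wvv β β, hlat.sum_wvvvv α α β β, hlat.sum_wvvvv β β γ γ, hlat.sum_wv β, hlat.sum_wvvv β α α, hlat.sum_wvvv β γ γ]
          simp only [kron, eq_self_iff_true, if_true, if_neg hab, if_neg hag, if_neg hbg, if_neg (Ne.symm hab),
            if_neg (Ne.symm hag), if_neg (Ne.symm hbg), hc2, hc4]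
          ring
      · -- F2g
        unfold probOf
        trans (∑ i, ((1/2) * (w i * (v i γ * v i γ))
            + (-(1/2)) * (w i * (v i α * v i α * v i γ * v i γ))
            + (-(1/2)) * (w i * (v i β * v i β * v i γ * v i γ))
            + (1/2) * (w i * (v i α ^ 2 * v i β ^ 2 * v i γ ^ 2))
            + (σ/2) * (w i * v i γ)
            + (-(σ/2)) * (w i * (v i γ * v i α * v i α))
            + (-(σ/2)) * (w i * (v i γ * v i β * v i β))
            + (σ/2) * (w i * (v i α ^ 2 * v i β ^ 2 * v i γ))))
        · refine Finset.sum_congr rfl fun i _ => ?_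
          beta_reduce
          rw [triple_ite', ind1' _ _ (tri i γ) hσ, ind0' _ (tri i α), ind0' _ (tri i β)]
          ring
        · simp only [Finset.sum_add_distrib, ← Finset.mul_sum]
          rw [hlat.sum_wvv γ γ, hlat.sum_wvvvv α α γ γ, hlat.sum_wvvvv β β γ γ, hlat.sum_wv γ, hlat.sum_wvvv γ α α, hlat.sum_wvvv γ β β]
          simp only [kron, eq_self_iff_true, if_true, if_neg hab, if_neg hag, if_neg hbg, if_neg (Ne.symm hab),
            if_neg (Ne.symm hag), if_neg (Ne.symm hbg), hc2, hc4]
          ring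
    · -- F3
      intro σ1 σ2 hσ1 hσ2
      refine ⟨?_, ?_, ?_⟩
      · -- F3ab
        unfold probOf
        trans (∑ i, ((1/4) * (w i * (v i α * v i α * v i β * v i β))
            + (-(1/4)) * (w i * (v i α ^ 2 * v i β ^ 2 * v i γ ^ 2))
            + (σ1/4) * (w i * (v i α * v i β * v i β))
            + (-(σ1/4)) * (w i * (v i α * v i β ^ 2 * v i γ ^ 2))
            + (σ2/4) * (w i * (v i α * v i α * v i β))
            + (-(σ2/4)) * (w i * (v i α ^ 2 * v i β * v i γ ^ 2))
            + (σ1*σ2/4) * (w i * (v i α * v i β))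
            + (-(σ1*σ2/4)) * (w i * (v i α * v i β * v i γ * v i γ))))
        · refine Finset.sum_congr rfl fun i _ => ?_
          beta_reduce
          rw [triple_ite', ind1' _ _ (tri i α) hσ1, ind1' _ _ (tri i β) hσ2, ind0' _ (tri i γ)]
          ring
        · simp only [Finset.sum_add_distrib, ← Finset.mul_sum]
          rw [hlat.sum_wvvvv α α β β, hlat.sum_wvvv α β β, hlat.sum_wvvv α α β, hlat.sum_wvv α β, hlat.sum_wvvvv α β γ γ]
          simp only [kron, eq_self_iff_true, if_true, if_neg hab, if_neg hag, if_neg hbg, if_neg (Ne.symm hab),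
            if_neg (Ne.symm hag), if_neg (Ne.symm hbg), hc2, hc4]
          ring
      · -- F3ag
        unfold probOf
        trans (∑ i, ((1/4) * (w i * (v i α * v i α * v i γ * v i γ))
            + (-(1/4)) * (w i * (v i α ^ 2 * v i β ^ 2 * v i γ ^ 2))
            + (σ1/4) * (w i * (v i α * v i γ * v i γ))
            + (-(σ1/4)) * (w i * (v i α * v i β ^ 2 * v i γ ^ 2))
            + (σ2/4) * (w i * (v i α * v i α * v i γ))
            + (-(σ2/4)) * (w i * (v i α ^ 2 * v i β ^ 2 * v i γ))
            + (σ1*σ2/4) * (w i * (v i α * v i γ))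
            + (-(σ1*σ2/4)) * (w i * (v i α * v i β * v i β * v i γ))))
        · refine Finset.sum_congr rfl fun i _ => ?_
          beta_reduce
          rw [triple_ite', ind1' _ _ (tri i α) hσ1, ind1' _ _ (tri i γ) hσ2, ind0' _ (tri i β)]
          ring
        · simp only [Finset.sum_add_distrib, ← Finset.mul_sum]
          rw [hlat.sum_wvvvv α α γ γ, hlat.sum_wvvv α γ γ, hlat.sum_wvvv α α γ, hlat.sum_wvv α γ, hlat.sum_wvvvv α β β γ]
          simp only [kron, eq_self_iff_true, if_true, if_neg hab, if_neg hag, if_neg hbg, if_neg (Ne.symm hab),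
            if_neg (Ne.symm hag), if_neg (Ne.symm hbg), hc2, hc4]
          ring
      · -- F3bg
        unfold probOf
        trans (∑ i, ((1/4) * (w i * (v i β * v i β * v i γ * v i γ))
            + (-(1/4)) * (w i * (v i α ^ 2 * v i β ^ 2 * v i γ ^ 2))
            + (σ1/4) * (w i * (v i β * v i γ * v i γ))
            + (-(σ1/4)) * (w i * (v i α ^ 2 * v i β * v i γ ^ 2))
            + (σ2/4) * (w i * (v i β * v i β * v i γ))
            + (-(σ2/4)) * (w i * (v i α ^ 2 * v i β ^ 2 * v i γ))
            + (σ1*σ2/4) * (w i * (v i β * v i γ))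
            + (-(σ1*σ2/4)) * (w i * (v i β * v i γ * v i α * v i α))))
        · refine Finset.sum_congr rfl fun i _ => ?_
          beta_reduce
          rw [triple_ite', ind1' _ _ (tri i β) hσ1, ind1' _ _ (tri i γ) hσ2, ind0' _ (tri i α)]
          ring
        · simp only [Finset.sum_add_distrib, ← Finset.mul_sum]
          rw [hlat.sum_wvvvv β β γ γ, hlat.sum_wvvv β γ γ, hlat.sum_wvvv β β γ, hlat.sum_wvv β γ, hlat.sum_wvvvv β γ α α]
          simp only [kron, eq_self_iff_true, if_true, if_neg hab, if_neg hag, if_neg hbg, if_neg (Ne.symm hab),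
            if_neg (Ne.symm hag), if_neg (Ne.symm hbg), hc2, hc4]
          ring
    · -- F4
      intro σ1 σ2 σ3 hσ1 hσ2 hσ3
      unfold probOf
      trans (∑ i, ((1/8) * (w i * (v i α ^ 2 * v i β ^ 2 * v i γ ^ 2))
          + (σ1/8) * (w i * (v i α * v i β ^ 2 * v i γ ^ 2))
          + (σ2/8) * (w i * (v i α ^ 2 * v i β * v i γ ^ 2))
          + (σ3/8) * (w i * (v i α ^ 2 * v i β ^ 2 * v i γ))
          + (σ1*σ2/8) * (w i * (v i α * v i β * v i γ * v i γ))
          + (σ1*σ3/8) * (w i * (v i α * v i β * v i β * v i γ))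
          + (σ2*σ3/8) * (w i * (v i β * v i γ * v i α * v i α))
          + (σ1*σ2*σ3/8) * (w i * (v i α * v i β * v i γ))))
      · refine Finset.sum_congr rfl fun i _ => ?_
        beta_reduce
        rw [triple_ite', ind1' _ _ (tri i α) hσ1, ind1' _ _ (tri i β) hσ2, ind1' _ _ (tri i γ) hσ3]
        ring
      · simp only [Finset.sum_add_distrib, ← Finset.mul_sum]
        rw [hlat.sum_wvvvv α β γ γ, hlat.sum_wvvvv α β β γ, hlat.sum_wvvvv β γ α α, hlat.sum_wvvv α β γ]
        simp only [kron, eq_self_iff_true, if_true, if_neg hab, if_neg hag, if_neg hbg, if_neg (Ne.symm hab),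
          if_neg (Ne.symm hag), if_neg (Ne.symm hbg), hc2, hc4]
        ring
  obtain ⟨c, ca, cb, cg, F1, F2, F3, F4⟩ := main
  obtain ⟨sa, hsa, ea⟩ := pick_sign ca
  obtain ⟨sb, hsb, eb⟩ := pick_sign cb
  obtain ⟨sg, hsg, eg⟩ := pick_sign cg
  have nsa : (-sa = -1 ∨ -sa = 1) := by rcases hsa with h | h <;> rw [h] <;> norm_num
  have nsb : (-sb = -1 ∨ -sb = 1) := by rcases hsb with h | h <;> rw [h] <;> norm_num
  have nsg : (-sg = -1 ∨ -sg = 1) := by rcases hsg with h | h <;> rw [h] <;> norm_num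
  have hlow : |ca| + |cb| + |cg| ≤ c := by
    have h := Pnn (fun i => v i α = -sa ∧ v i β = -sb ∧ v i γ = -sg)
    rw [F4 (-sa) (-sb) (-sg) nsa nsb nsg] at h
    nlinarith [ea, eb, eg]
  have hpab : c + |ca| + |cb| ≤ 1 / 72 := by
    have h := Pnn (fun i => v i α = sa ∧ v i β = sb ∧ v i γ = 0)
    rw [(F3 sa sb hsa hsb).1] at h
    nlinarith [ea, eb]
  have hpag : c + |ca| + |cg| ≤ 1 / 72 := by
    have h := Pnn (fun i => v i α = sa ∧ v i γ = sg ∧ v i β = 0)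
    rw [(F3 sa sg hsa hsg).2.1] at h
    nlinarith [ea, eg]
  have hpbg : c + |cb| + |cg| ≤ 1 / 72 := by
    have h := Pnn (fun i => v i β = sb ∧ v i γ = sg ∧ v i α = 0)
    rw [(F3 sb sg hsb hsg).2.2] at h
    nlinarith [eb, eg]
  have habs : ∀ x : ℝ, 0 ≤ |x| := abs_nonneg
  have hc0 : 0 ≤ c := le_trans (by positivity) hlow
  refine ⟨c, ⟨hc0, by nlinarith [habs ca, habs cb]⟩,
    ca, abs_le.mp (by nlinarith [habs cb] : |ca| ≤ 1 / 72),
    cb, abs_le.mp (by nlinarith [habs ca] : |cb| ≤ 1 / 72),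
    cg, abs_le.mp (by nlinarith [habs ca] : |cg| ≤ 1 / 72),
    F1, ?_, ?_, ?_, hlow, hpab, hpag, hpbg⟩
  · intro σ hσ
    simp only [Set.mem_insert_iff, Set.mem_singleton_iff] at hσ
    exact F2 σ hσ
  · intro σ1 hσ1 σ2 hσ2
    simp only [Set.mem_insert_iff, Set.mem_singleton_iff] at hσ1 hσ2
    exact F3 σ1 σ2 hσ1 hσ2
  · intro σ1 hσ1 σ2 hσ2 σ3 hσ3
    simp only [Set.mem_insert_iff, Set.mem_singleton_iff] at hσ1 hσ2 hσ3
    exact F4 σ1 σ2 σ3 hσ1 hσ2 hσ3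

end
end

section
/- Let d = 3 and let (V, w) be a lattice whose component random variables X₁, X₂, X₃ take values in {-1, 0, 1}. Suppose that for all pairwise distinct α, β, γ ∈ {1,2,3} there exist constants c ∈ [0, 1/72] and c_α, c_β, c_γ ∈ [-1/72, 1/72] such that: P(X_α = 0) = 2/3 and P(X_α = ±1) = 1/6; P(X_α = X_β = 0) = 4/9; P(X_α = σ_α, X_β = 0) = 1/9 for σ_α ∈ {-1,1}; P(X_α = σ_α, X_β = σ_β) = 1/36 for σ_α, σ_β ∈ {-1,1}; P(X_α = X_β = X_γ = 0) = 1/3 − 8c; P(X_α = σ_α, X_β = X_γ = 0) = 1/18 + 4c + 4σ_α c_α; P(X_α = σ_α, X_β = σ_β, X_γ = 0) = 1/36 − 2c − 2σ_α c_α − 2σ_β c_β; and P(X_α = σ_α, X_β = σ_β, X_γ = σ_γ) = c + σ_α c_α + σ_β c_β + σ_γ c_γ for σ's in {-1,1}. Then (V, w) is an isotropic lattice with speed of sound c_s = 3^{-1/2}. -/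
open Real Set
noncomputable section

/- STATEMENT 17: Converse characterization of 3D isotropic lattices: if the single, pair and
triple joint probabilities of the component random variables (valued in {-1,0,1}) have the
indicated form for some constants c ∈ [0,1/72], c_α, c_β, c_γ ∈ [-1/72,1/72], then (𝒱, w)
is an isotropic lattice with speed of sound c_s = 3^{-1/2}. -/


/-- Auxiliary selector: picks the `α`-th of three reals. -/
def pick3 (α : Fin 3) (x y z : ℝ) : ℝ := if α = 0 then x else if α = 1 then y else z

set_option maxHeartbeats 4000000
theorem threeD_lattice_isotropic_of_law (n : ℕ)
    (v : Fin (n + 1) → Spc 3) (w : Fin (n + 1) → ℝ)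
    -- (𝒱, w) is a lattice …
    (hw : ∀ i, 0 < w i) (hsum : ∑ i, w i = 1) (hv0 : v 0 = 0)
    (hinj : Function.Injective v)
    -- … whose velocity components take values in {-1,0,1}
    (hval : ∀ i, ∀ α : Fin 3, v i α ∈ ({-1, 0, 1} : Set ℝ))
    -- single-variable and pair laws
    (h1 : ∀ α : Fin 3,
      probOf n w (fun i => v i α = 0) = 2 / 3 ∧
      probOf n w (fun i => v i α = 1) = 1 / 6 ∧
      probOf n w (fun i => v i α = -1) = 1 / 6)
    (h2 : ∀ α β : Fin 3, α ≠ β →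
      probOf n w (fun i => v i α = 0 ∧ v i β = 0) = 4 / 9 ∧
      (∀ σ ∈ ({-1, 1} : Set ℝ),
        probOf n w (fun i => v i α = σ ∧ v i β = 0) = 1 / 9) ∧
      (∀ σ1 ∈ ({-1, 1} : Set ℝ), ∀ σ2 ∈ ({-1, 1} : Set ℝ),
        probOf n w (fun i => v i α = σ1 ∧ v i β = σ2) = 1 / 36))
    -- triple laws, for some constants c, c_α, c_β, c_γ
    (h3 : ∀ α β γ : Fin 3, α ≠ β → α ≠ γ → β ≠ γ →
      ∃ c ∈ Icc (0 : ℝ) (1 / 72), ∃ ca ∈ Icc (-(1 / 72) : ℝ) (1 / 72),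
      ∃ cb ∈ Icc (-(1 / 72) : ℝ) (1 / 72), ∃ cg ∈ Icc (-(1 / 72) : ℝ) (1 / 72),
        probOf n w (fun i => v i α = 0 ∧ v i β = 0 ∧ v i γ = 0) = 1 / 3 - 8 * c ∧
        (∀ σ ∈ ({-1, 1} : Set ℝ),
          probOf n w (fun i => v i α = σ ∧ v i β = 0 ∧ v i γ = 0) =
            1 / 18 + 4 * c + 4 * σ * ca ∧
          probOf n w (fun i => v i β = σ ∧ v i α = 0 ∧ v i γ = 0) =
            1 / 18 + 4 * c + 4 * σ * cb ∧
          probOf n w (fun i => v i γ = σ ∧ v i α = 0 ∧ v i β = 0) =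
            1 / 18 + 4 * c + 4 * σ * cg) ∧
        (∀ σ1 ∈ ({-1, 1} : Set ℝ), ∀ σ2 ∈ ({-1, 1} : Set ℝ),
          probOf n w (fun i => v i α = σ1 ∧ v i β = σ2 ∧ v i γ = 0) =
            1 / 36 - 2 * c - 2 * σ1 * ca - 2 * σ2 * cb ∧
          probOf n w (fun i => v i α = σ1 ∧ v i γ = σ2 ∧ v i β = 0) =
            1 / 36 - 2 * c - 2 * σ1 * ca - 2 * σ2 * cg ∧
          probOf n w (fun i => v i β = σ1 ∧ v i γ = σ2 ∧ v i α = 0) =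
            1 / 36 - 2 * c - 2 * σ1 * cb - 2 * σ2 * cg) ∧
        (∀ σ1 ∈ ({-1, 1} : Set ℝ), ∀ σ2 ∈ ({-1, 1} : Set ℝ), ∀ σ3 ∈ ({-1, 1} : Set ℝ),
          probOf n w (fun i => v i α = σ1 ∧ v i β = σ2 ∧ v i γ = σ3) =
            c + σ1 * ca + σ2 * cb + σ3 * cg)) :
    IsoLattice 3 n v w (Real.sqrt 3)⁻¹ := by
  classical
  have hm1 : (-1 : ℝ) ∈ ({-1, 1} : Set ℝ) := by norm_num
  have hp1 : (1 : ℝ) ∈ ({-1, 1} : Set ℝ) := by norm_num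
  obtain ⟨c, hc, ca, hca, cb, hcb, cg, hcg, H0, H1, H2, H3⟩ :=
    h3 0 1 2 (by decide) (by decide) (by decide)
  have probOf_congr : ∀ (S S' : Fin (n + 1) → Prop), (∀ i, S i ↔ S' i) →
      probOf n w S = probOf n w S' := by
    intro S S' h
    unfold probOf
    exact Finset.sum_congr rfl fun i _ => if_congr (h i) rfl rfl
  have azzz := H0
  have apzz := (H1 1 hp1).1
  have amzz := (H1 (-1) hm1).1
  have azpz : probOf n w (fun i => v i 0 = 0 ∧ v i 1 = 1 ∧ v i 2 = 0) = 1 / 18 + 4 * c + 4 * 1 * cb := by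
    rw [probOf_congr _ (fun i => v i 1 = 1 ∧ v i 0 = 0 ∧ v i 2 = 0) (fun i => by tauto)]
    exact (H1 1 hp1).2.1
  have azmz : probOf n w (fun i => v i 0 = 0 ∧ v i 1 = -1 ∧ v i 2 = 0) = 1 / 18 + 4 * c + 4 * (-1) * cb := by
    rw [probOf_congr _ (fun i => v i 1 = -1 ∧ v i 0 = 0 ∧ v i 2 = 0) (fun i => by tauto)]
    exact (H1 (-1) hm1).2.1
  have azzp : probOf n w (fun i => v i 0 = 0 ∧ v i 1 = 0 ∧ v i 2 = 1) = 1 / 18 + 4 * c + 4 * 1 * cg := by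
    rw [probOf_congr _ (fun i => v i 2 = 1 ∧ v i 0 = 0 ∧ v i 1 = 0) (fun i => by tauto)]
    exact (H1 1 hp1).2.2
  have azzm : probOf n w (fun i => v i 0 = 0 ∧ v i 1 = 0 ∧ v i 2 = -1) = 1 / 18 + 4 * c + 4 * (-1) * cg := by
    rw [probOf_congr _ (fun i => v i 2 = -1 ∧ v i 0 = 0 ∧ v i 1 = 0) (fun i => by tauto)]
    exact (H1 (-1) hm1).2.2
  have appz := (H2 1 hp1 1 hp1).1
  have apzp : probOf n w (fun i => v i 0 = 1 ∧ v i 1 = 0 ∧ v i 2 = 1) = 1 / 36 - 2 * c - 2 * 1 * ca - 2 * 1 * cg := by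
    rw [probOf_congr _ (fun i => v i 0 = 1 ∧ v i 2 = 1 ∧ v i 1 = 0) (fun i => by tauto)]
    exact (H2 1 hp1 1 hp1).2.1
  have azpp : probOf n w (fun i => v i 0 = 0 ∧ v i 1 = 1 ∧ v i 2 = 1) = 1 / 36 - 2 * c - 2 * 1 * cb - 2 * 1 * cg := by
    rw [probOf_congr _ (fun i => v i 1 = 1 ∧ v i 2 = 1 ∧ v i 0 = 0) (fun i => by tauto)]
    exact (H2 1 hp1 1 hp1).2.2
  have apmz := (H2 1 hp1 (-1) hm1).1
  have apzm : probOf n w (fun i => v i 0 = 1 ∧ v i 1 = 0 ∧ v i 2 = -1) = 1 / 36 - 2 * c - 2 * 1 * ca - 2 * (-1) * cg := by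
    rw [probOf_congr _ (fun i => v i 0 = 1 ∧ v i 2 = -1 ∧ v i 1 = 0) (fun i => by tauto)]
    exact (H2 1 hp1 (-1) hm1).2.1
  have azpm : probOf n w (fun i => v i 0 = 0 ∧ v i 1 = 1 ∧ v i 2 = -1) = 1 / 36 - 2 * c - 2 * 1 * cb - 2 * (-1) * cg := by
    rw [probOf_congr _ (fun i => v i 1 = 1 ∧ v i 2 = -1 ∧ v i 0 = 0) (fun i => by tauto)]
    exact (H2 1 hp1 (-1) hm1).2.2
  have ampz := (H2 (-1) hm1 1 hp1).1
  have amzp : probOf n w (fun i => v i 0 = -1 ∧ v i 1 = 0 ∧ v i 2 = 1) = 1 / 36 - 2 * c - 2 * (-1) * ca - 2 * 1 * cg := by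
    rw [probOf_congr _ (fun i => v i 0 = -1 ∧ v i 2 = 1 ∧ v i 1 = 0) (fun i => by tauto)]
    exact (H2 (-1) hm1 1 hp1).2.1
  have azmp : probOf n w (fun i => v i 0 = 0 ∧ v i 1 = -1 ∧ v i 2 = 1) = 1 / 36 - 2 * c - 2 * (-1) * cb - 2 * 1 * cg := by
    rw [probOf_congr _ (fun i => v i 1 = -1 ∧ v i 2 = 1 ∧ v i 0 = 0) (fun i => by tauto)]
    exact (H2 (-1) hm1 1 hp1).2.2
  have ammz := (H2 (-1) hm1 (-1) hm1).1
  have amzm : probOf n w (fun i => v i 0 = -1 ∧ v i 1 = 0 ∧ v i 2 = -1) = 1 / 36 - 2 * c - 2 * (-1) * ca - 2 * (-1) * cg := by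
    rw [probOf_congr _ (fun i => v i 0 = -1 ∧ v i 2 = -1 ∧ v i 1 = 0) (fun i => by tauto)]
    exact (H2 (-1) hm1 (-1) hm1).2.1
  have azmm : probOf n w (fun i => v i 0 = 0 ∧ v i 1 = -1 ∧ v i 2 = -1) = 1 / 36 - 2 * c - 2 * (-1) * cb - 2 * (-1) * cg := by
    rw [probOf_congr _ (fun i => v i 1 = -1 ∧ v i 2 = -1 ∧ v i 0 = 0) (fun i => by tauto)]
    exact (H2 (-1) hm1 (-1) hm1).2.2
  have appp := H3 1 hp1 1 hp1 1 hp1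
  have appm := H3 1 hp1 1 hp1 (-1) hm1
  have apmp := H3 1 hp1 (-1) hm1 1 hp1
  have apmm := H3 1 hp1 (-1) hm1 (-1) hm1
  have ampp := H3 (-1) hm1 1 hp1 1 hp1
  have ampm := H3 (-1) hm1 1 hp1 (-1) hm1
  have ammp := H3 (-1) hm1 (-1) hm1 1 hp1
  have ammm := H3 (-1) hm1 (-1) hm1 (-1) hm1
  have Tsum : ∀ F : ℝ → ℝ, ∑ s ∈ ({-1, 0, 1} : Finset ℝ), F s = F (-1) + F 0 + F 1 := by
    intro F
    rw [show ({-1, 0, 1} : Finset ℝ) = insert (-1) (insert 0 {1}) from rfl,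
      Finset.sum_insert (by norm_num), Finset.sum_insert (by norm_num), Finset.sum_singleton,
      ← add_assoc]
  have expand : ∀ g : ℝ → ℝ → ℝ → ℝ,
      ∑ i, w i * g (v i 0) (v i 1) (v i 2) =
      ∑ s ∈ ({-1, 0, 1} : Finset ℝ), ∑ t ∈ ({-1, 0, 1} : Finset ℝ), ∑ u ∈ ({-1, 0, 1} : Finset ℝ),
        g s t u * probOf n w (fun i => v i 0 = s ∧ v i 1 = t ∧ v i 2 = u) := by
    intro g
    have key : ∀ i, w i * g (v i 0) (v i 1) (v i 2) =
        ∑ s ∈ ({-1, 0, 1} : Finset ℝ), ∑ t ∈ ({-1, 0, 1} : Finset ℝ), ∑ u ∈ ({-1, 0, 1} : Finset ℝ),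
          (if v i 0 = s ∧ v i 1 = t ∧ v i 2 = u then g s t u * w i else 0) := by
      intro i
      have h0 := hval i 0
      have h1' := hval i 1
      have h2' := hval i 2
      simp only [Set.mem_insert_iff, Set.mem_singleton_iff] at h0 h1' h2'
      simp only [Tsum]
      rcases h0 with h0 | h0 | h0 <;> rcases h1' with h1' | h1' | h1' <;>
        rcases h2' with h2' | h2' | h2' <;> rw [h0, h1', h2'] <;> norm_num [mul_comm]
    have hpush : ∀ s t u : ℝ,
        g s t u * probOf n w (fun i => v i 0 = s ∧ v i 1 = t ∧ v i 2 = u) =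
        ∑ i, (if v i 0 = s ∧ v i 1 = t ∧ v i 2 = u then g s t u * w i else 0) := by
      intro s t u
      unfold probOf
      rw [Finset.mul_sum]
      exact Finset.sum_congr rfl fun i _ => by by_cases h : v i 0 = s ∧ v i 1 = t ∧ v i 2 = u <;> simp [h]
    calc ∑ i, w i * g (v i 0) (v i 1) (v i 2)
        = ∑ i, ∑ s ∈ ({-1, 0, 1} : Finset ℝ), ∑ t ∈ ({-1, 0, 1} : Finset ℝ), ∑ u ∈ ({-1, 0, 1} : Finset ℝ),
            (if v i 0 = s ∧ v i 1 = t ∧ v i 2 = u then g s t u * w i else 0) :=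
          Finset.sum_congr rfl fun i _ => key i
      _ = ∑ s ∈ ({-1, 0, 1} : Finset ℝ), ∑ i, ∑ t ∈ ({-1, 0, 1} : Finset ℝ), ∑ u ∈ ({-1, 0, 1} : Finset ℝ),
            (if v i 0 = s ∧ v i 1 = t ∧ v i 2 = u then g s t u * w i else 0) := Finset.sum_comm
      _ = ∑ s ∈ ({-1, 0, 1} : Finset ℝ), ∑ t ∈ ({-1, 0, 1} : Finset ℝ), ∑ i, ∑ u ∈ ({-1, 0, 1} : Finset ℝ),
            (if v i 0 = s ∧ v i 1 = t ∧ v i 2 = u then g s t u * w i else 0) :=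
          Finset.sum_congr rfl fun s _ => Finset.sum_comm
      _ = ∑ s ∈ ({-1, 0, 1} : Finset ℝ), ∑ t ∈ ({-1, 0, 1} : Finset ℝ), ∑ u ∈ ({-1, 0, 1} : Finset ℝ), ∑ i,
            (if v i 0 = s ∧ v i 1 = t ∧ v i 2 = u then g s t u * w i else 0) :=
          Finset.sum_congr rfl fun s _ => Finset.sum_congr rfl fun t _ => Finset.sum_comm
      _ = ∑ s ∈ ({-1, 0, 1} : Finset ℝ), ∑ t ∈ ({-1, 0, 1} : Finset ℝ), ∑ u ∈ ({-1, 0, 1} : Finset ℝ),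
            g s t u * probOf n w (fun i => v i 0 = s ∧ v i 1 = t ∧ v i 2 = u) :=
          Finset.sum_congr rfl fun s _ => Finset.sum_congr rfl fun t _ =>
            Finset.sum_congr rfl fun u _ => (hpush s t u).symm
  have hpick : ∀ (δ : Fin 3) (i : Fin (n + 1)), pick3 δ (v i 0) (v i 1) (v i 2) = v i δ := by
    intro δ i
    fin_cases δ <;> simp [pick3]
  have hs3 : Real.sqrt 3 ^ 2 = 3 := Real.sq_sqrt (by norm_num)
  have hcs2 : ((Real.sqrt 3)⁻¹) ^ 2 = 1 / 3 := by rw [inv_pow, hs3]; norm_num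
  have hcs4 : ((Real.sqrt 3)⁻¹) ^ 4 = 1 / 9 := by
    rw [show ((Real.sqrt 3)⁻¹ : ℝ) ^ 4 = (((Real.sqrt 3)⁻¹) ^ 2) ^ 2 by ring, hcs2]; norm_num
  refine ⟨inv_pos.mpr (Real.sqrt_pos.mpr (by norm_num)), hw, hv0, hinj, hsum, ?_, ?_, ?_, ?_⟩
  · intro α
    have E := expand (fun x y z => pick3 α x y z)
    simp only [hpick] at E
    rw [E]
    simp only [Tsum]
    fin_cases α <;>
      norm_num [pick3, Fin.ext_iff] <;> simp only [azzz, apzz, amzz, azpz, azmz, azzp, azzm, appz, apmz, ampz, ammz, apzp, apzm, amzp, amzm, azpp, azpm, azmp, azmm, appp, appm, apmp, apmm, ampp, ampm, ammp, ammm] <;> ring_nf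
  · intro α β
    have E := expand (fun x y z => pick3 α x y z * pick3 β x y z)
    simp only [hpick] at E
    rw [E, hcs2]
    simp only [Tsum]
    fin_cases α <;> fin_cases β <;>
      norm_num [pick3, kron, Fin.ext_iff] <;> simp only [azzz, apzz, amzz, azpz, azmz, azzp, azzm, appz, apmz, ampz, ammz, apzp, apzm, amzp, amzm, azpp, azpm, azmp, azmm, appp, appm, apmp, apmm, ampp, ampm, ammp, ammm] <;> ring_nf
  · intro α β γ
    have E := expand (fun x y z => pick3 α x y z * pick3 β x y z * pick3 γ x y z)
    simp only [hpick] at E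
    rw [E]
    simp only [Tsum]
    fin_cases α <;> fin_cases β <;> fin_cases γ <;>
      norm_num [pick3, Fin.ext_iff] <;> simp only [azzz, apzz, amzz, azpz, azmz, azzp, azzm, appz, apmz, ampz, ammz, apzp, apzm, amzp, amzm, azpp, azpm, azmp, azmm, appp, appm, apmp, apmm, ampp, ampm, ammp, ammm] <;> ring_nf
  · intro α β γ ζ
    have E := expand (fun x y z => pick3 α x y z * pick3 β x y z * pick3 γ x y z * pick3 ζ x y z)
    simp only [hpick] at E
    rw [E, hcs4]
    simp only [Tsum]
    fin_cases α <;> fin_cases β <;> fin_cases γ <;> fin_cases ζ <;>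
      norm_num [pick3, kron, Fin.ext_iff] <;> simp only [azzz, apzz, amzz, azpz, azmz, azzp, azzm, appz, apmz, ampz, ammz, apzp, apzm, amzp, amzm, azpp, azpm, azmp, azmm, appp, appm, apmp, apmm, ampp, ampm, ammp, ammm] <;> ring_nf


end
end
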